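/- The global function f_Y of the sand automaton Y is not injective: the two distinct configurations c and c' defined by c_{2i} = i, c_{2i+1} = i + 2 and c'_{2i} = i, c'_{2i+1} = i + 3 for all i ∈ ℤ satisfy f_Y(c) = f_Y(c') = c. -/

import Mathlib

/-- The extended integers `ℤ ∪ {-∞, +∞}`. -/
abbrev EZ : Type := WithBot (WithTop ℤ)

/-- Embedding of `ℤ` into the extended integers. -/
def finVal (n : ℤ) : EZ := ((n : WithTop ℤ) : EZ)

/-- The integer value of a finite extended integer (`0` on `±∞`). -/
def valZ (x : EZ) : ℤ := WithBot.recBotCoe 0 (fun y => WithTop.recTopCoe 0 id y) x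

/-- The measuring device `β_l^m`. -/
noncomputable def beta (l : ℕ) (m : ℤ) (n : EZ) : EZ :=
  if finVal (m + (l : ℤ)) < n then ⊤
  else if n < finVal (m - (l : ℤ)) then ⊥
  else WithBot.map (WithTop.map (fun k => k - m)) n

/-- Reference height: the value of `x` if finite, `0` if `x = ±∞`. -/
def refH (x : EZ) : ℤ := if x = ⊥ ∨ x = ⊤ then 0 else valZ x

/-- One-dimensional sandpile configurations. -/
abbrev Config : Type := ℤ → EZ

/-- The neighborhood sequence `d_r^i(c)`: the `2r`-tuple of measured differences. -/
noncomputable def nbhd (r : ℕ) (c : Config) (i : ℤ) : Fin (2 * r) → EZ :=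
  fun j => beta r (refH (c i))
    (c (i + (if (j : ℕ) < r then ((j : ℕ) : ℤ) - (r : ℤ) else ((j : ℕ) : ℤ) - (r : ℤ) + 1)))

/-- The global function of the sand automaton of radius `r` with local rule `lam`. -/
noncomputable def globalF (r : ℕ) (lam : (Fin (2 * r) → EZ) → ℤ) (c : Config) : Config :=
  fun i => if c i = ⊥ ∨ c i = ⊤ then c i
    else finVal (valZ (c i) + lam (nbhd r c i))

/-- Finite configurations. -/
def FiniteConf (c : Config) : Prop := ∃ k : ℕ, ∀ i : ℤ, (k : ℤ) ≤ |i| → c i = finVal 0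

/-- Periodic configurations. -/
def PeriodicConf (c : Config) : Prop := ∃ p : ℤ, p ≠ 0 ∧ ∀ i : ℤ, c (i + p) = c i


/-- The local rule of the sand automaton `Y` (radius 2, arguments `(a,b,x,y)`):
returns `-1` on `(+∞,-,-,-)`, `(2,-,-,-)`, `(1,-,-,-)`, `(0,-,-,-)`, `(-1,-∞,-,-)`,
and `0` otherwise. -/
def lamY (v : Fin 4 → EZ) : ℤ :=
  if v 0 = ⊤ ∨ v 0 = finVal 2 ∨ v 0 = finVal 1 ∨ v 0 = finVal 0 then -1
  else if v 0 = finVal (-1) ∧ v 1 = ⊥ then -1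
  else 0


lemma finVal_ne_bot (n : ℤ) : finVal n ≠ ⊥ := by simp [finVal]
lemma finVal_ne_top (n : ℤ) : finVal n ≠ ⊤ := by simp [finVal]
lemma finVal_inj {a b : ℤ} (h : finVal a = finVal b) : a = b := by simpa [finVal] using h
lemma valZ_finVal (n : ℤ) : valZ (finVal n) = n := rfl
lemma refH_finVal (n : ℤ) : refH (finVal n) = n := by
  simp [refH, finVal_ne_bot, finVal_ne_top, valZ_finVal]
lemma finVal_lt_iff {a b : ℤ} : finVal a < finVal b ↔ a < b := by simp [finVal]
lemma beta2_fin (m n : ℤ) (h1 : ¬ m + 2 < n) (h2 : ¬ n < m - 2) :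
    beta 2 m (finVal n) = finVal (n - m) := by
  rw [beta]
  norm_num [finVal_lt_iff, h1, h2]
  simp [finVal, WithBot.map_coe, WithTop.map_coe]
lemma beta2_top (m n : ℤ) (h : m + 2 < n) : beta 2 m (finVal n) = ⊤ := by
  simp [beta, finVal_lt_iff, h]
lemma beta2_bot (m n : ℤ) (h1 : ¬ m + 2 < n) (h : n < m - 2) : beta 2 m (finVal n) = ⊥ := by
  simp [beta, finVal_lt_iff, h1, h]
lemma nbhd0 (c : Config) (i : ℤ) : nbhd 2 c i 0 = beta 2 (refH (c i)) (c (i + -2)) := by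
  norm_num [nbhd]
lemma nbhd1 (c : Config) (i : ℤ) : nbhd 2 c i 1 = beta 2 (refH (c i)) (c (i + -1)) := by
  norm_num [nbhd]

lemma lamY_of_neg1_bot (v : Fin 4 → EZ) (h0 : v 0 = finVal (-1)) (h1 : v 1 = ⊥) :
    lamY v = -1 := by
  rw [lamY, if_neg, if_pos ⟨h0, h1⟩]
  rw [h0]
  push_neg
  refine ⟨finVal_ne_top _, ?_, ?_, ?_⟩ <;>
    exact fun h => absurd (finVal_inj h) (by omega)

lemma lamY_of_neg1_fin (v : Fin 4 → EZ) (h0 : v 0 = finVal (-1)) (t : ℤ)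
    (h1 : v 1 = finVal t) : lamY v = 0 := by
  rw [lamY, if_neg, if_neg]
  · rw [h1]; rintro ⟨-, h⟩; exact finVal_ne_bot t h
  · rw [h0]
    push_neg
    refine ⟨finVal_ne_top _, ?_, ?_, ?_⟩ <;>
      exact fun h => absurd (finVal_inj h) (by omega)

lemma global_step (c : Config) (j m L : ℤ) (hj : c j = finVal m)
    (hL : lamY (nbhd 2 c j) = L) : globalF 2 lamY c j = finVal (m + L) := by
  rw [globalF]
  rw [if_neg (by rw [hj]; push_neg; exact ⟨finVal_ne_bot m, finVal_ne_top m⟩)]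
  rw [hj, valZ_finVal, hL]

/-- A single site update, given the values at positions j, j-2, j-1. -/
lemma step_eval (c : Config) (j m a b L : ℤ) (hj : c j = finVal m)
    (ha : c (j + -2) = finVal a) (hb : c (j + -1) = finVal b)
    (haa : a - m = -1)
    (hL : (¬ b < m - 2 ∧ L = 0) ∨ (¬ m + 2 < b ∧ b < m - 2 ∧ L = -1)) :
    globalF 2 lamY c j = finVal (m + L) := by
  have h0 : nbhd 2 c j 0 = finVal (-1) := by
    rw [nbhd0, hj, refH_finVal, ha, beta2_fin m a (by omega) (by omega), haa]
  rcases hL with ⟨hb2, hL0⟩ | ⟨hb1, hb2, hL0⟩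
  · have hblt : ¬ m + 2 < b ∨ m + 2 < b := by omega
    rcases hblt with hb1 | hb1
    · have h1 : nbhd 2 c j 1 = finVal (b - m) := by
        rw [nbhd1, hj, refH_finVal, hb, beta2_fin m b hb1 hb2]
      exact global_step c j m L hj (hL0 ▸ lamY_of_neg1_fin _ h0 _ h1)
    · have h1 : nbhd 2 c j 1 = ⊤ := by
        rw [nbhd1, hj, refH_finVal, hb, beta2_top m b hb1]
      rw [global_step c j m 0 hj ?_, hL0]
      rw [lamY, if_neg, if_neg]
      · rw [h1]; rintro ⟨-, h⟩; exact absurd h (by simp)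
      · rw [h0]
        push_neg
        refine ⟨finVal_ne_top _, ?_, ?_, ?_⟩ <;>
          exact fun h => absurd (finVal_inj h) (by omega)
  · have h1 : nbhd 2 c j 1 = ⊥ := by
      rw [nbhd1, hj, refH_finVal, hb, beta2_bot m b hb1 hb2]
    exact global_step c j m L hj (hL0 ▸ lamY_of_neg1_bot _ h0 h1)

/-- `f_Y` is not injective: the two distinct configurations `c` (with `c_{2i} = i`,
`c_{2i+1} = i + 2`) and `c'` (with `c'_{2i} = i`, `c'_{2i+1} = i + 3`) satisfy
`f_Y(c) = f_Y(c') = c`. -/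
theorem Y_not_injective (c c' : Config)
    (hc : ∀ i : ℤ, c (2 * i) = finVal i ∧ c (2 * i + 1) = finVal (i + 2))
    (hc' : ∀ i : ℤ, c' (2 * i) = finVal i ∧ c' (2 * i + 1) = finVal (i + 3)) :
    c ≠ c' ∧ globalF 2 lamY c = c ∧ globalF 2 lamY c' = c ∧
    ¬ Function.Injective (globalF 2 lamY) := by
  have hne : c ≠ c' := by
    intro h
    have h1 := (hc 0).2
    have h2 := (hc' 0).2
    rw [h, h2] at h1
    have := finVal_inj h1
    omega
  have hceven : ∀ i : ℤ, c (2 * i) = finVal i := fun i => (hc i).1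
  have hcodd : ∀ i : ℤ, c (2 * i + 1) = finVal (i + 2) := fun i => (hc i).2
  have hc'even : ∀ i : ℤ, c' (2 * i) = finVal i := fun i => (hc' i).1
  have hc'odd : ∀ i : ℤ, c' (2 * i + 1) = finVal (i + 3) := fun i => (hc' i).2
  have hfc : globalF 2 lamY c = c := by
    funext j
    rcases Int.even_or_odd' j with ⟨k, hk | hk⟩
    · subst hk
      rw [hceven k]
      refine step_eval c (2 * k) k (k - 1) (k + 1) 0 (hceven k) ?_ ?_ (by ring)
        (Or.inl ⟨by omega, rfl⟩) |>.trans (by ring_nf)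
      · have := hceven (k - 1); rw [show 2 * (k - 1) = 2 * k + -2 by ring] at this; exact this
      · have := hcodd (k - 1)
        rw [show 2 * (k - 1) + 1 = 2 * k + -1 by ring, show k - 1 + 2 = k + 1 by ring] at this
        exact this
    · subst hk
      rw [hcodd k]
      refine step_eval c (2 * k + 1) (k + 2) (k + 1) k 0 (hcodd k) ?_ ?_ (by ring)
        (Or.inl ⟨by omega, rfl⟩) |>.trans (by ring_nf)
      · have := hcodd (k - 1)
        rw [show 2 * (k - 1) + 1 = 2 * k + 1 + -2 by ring, show k - 1 + 2 = k + 1 by ring] at this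
        exact this
      · have := hceven k; rw [show 2 * k = 2 * k + 1 + -1 by ring] at this; exact this
  have hfc' : globalF 2 lamY c' = c := by
    funext j
    rcases Int.even_or_odd' j with ⟨k, hk | hk⟩
    · subst hk
      rw [hceven k]
      refine step_eval c' (2 * k) k (k - 1) (k + 2) 0 (hc'even k) ?_ ?_ (by ring)
        (Or.inl ⟨by omega, rfl⟩) |>.trans (by ring_nf)
      · have := hc'even (k - 1); rw [show 2 * (k - 1) = 2 * k + -2 by ring] at this; exact this
      · have := hc'odd (k - 1)
        rw [show 2 * (k - 1) + 1 = 2 * k + -1 by ring, show k - 1 + 3 = k + 2 by ring] at this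
        exact this
    · subst hk
      rw [hcodd k]
      refine step_eval c' (2 * k + 1) (k + 3) (k + 2) k (-1) (hc'odd k) ?_ ?_ (by ring)
        (Or.inr ⟨by omega, by omega, rfl⟩) |>.trans (by ring_nf)
      · have := hc'odd (k - 1)
        rw [show 2 * (k - 1) + 1 = 2 * k + 1 + -2 by ring, show k - 1 + 3 = k + 2 by ring] at this
        exact this
      · have := hc'even k; rw [show 2 * k = 2 * k + 1 + -1 by ring] at this; exact this
  refine ⟨hne, hfc, hfc', fun hinj => hne (hinj (hfc.trans hfc'.symm))⟩
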